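/- Let p ⊆ Z^2 be a finite, nonempty, 4-connected, horizontally and vertically convex set (an HV-convex polyomino). If p contains a cell (x,y) with x'' > x and y'' < y' for some cell (x'',y'') of p, where (x,y) is a NE corner and (x,y') is the southernmost cell of p in column x, then additionally there is a cell of p either of the form (x'', y'-1) with x'' > x or of the form (x+1, y'') with y'' < y'. -/

import Mathlib

def Adj (a b : ℤ × ℤ) : Prop := (a.1 - b.1).natAbs + (a.2 - b.2).natAbs = 1

def FourConnected (p : Set (ℤ × ℤ)) : Prop :=
  ∀ c1 ∈ p, ∀ c2 ∈ p, ∃ l : List (ℤ × ℤ),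
    l.head? = some c1 ∧ l.getLast? = some c2 ∧ (∀ c ∈ l, c ∈ p) ∧ l.Chain' Adj

def HConvex (p : Set (ℤ × ℤ)) : Prop :=
  ∀ x1 x2 x3 y : ℤ, x1 ≤ x2 → x2 ≤ x3 → (x1, y) ∈ p → (x3, y) ∈ p → (x2, y) ∈ p

def VConvex (p : Set (ℤ × ℤ)) : Prop :=
  ∀ x y1 y2 y3 : ℤ, y1 ≤ y2 → y2 ≤ y3 → (x, y1) ∈ p → (x, y3) ∈ p → (x, y2) ∈ p

def HSeg (p : Set (ℤ × ℤ)) (x1 x2 y : ℤ) : Prop :=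
  ∀ x : ℤ, min x1 x2 ≤ x → x ≤ max x1 x2 → (x, y) ∈ p

def VSeg (p : Set (ℤ × ℤ)) (x y1 y2 : ℤ) : Prop :=
  ∀ y : ℤ, min y1 y2 ≤ y → y ≤ max y1 y2 → (x, y) ∈ p

/-- An inner path from `c1` to `c2` changing direction at most once:
either a horizontal segment followed by a vertical one, or vice versa,
entirely contained in `p`. -/
def LPath (p : Set (ℤ × ℤ)) (c1 c2 : ℤ × ℤ) : Prop :=
  (HSeg p c1.1 c2.1 c1.2 ∧ VSeg p c2.1 c1.2 c2.2) ∨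
  (VSeg p c1.1 c1.2 c2.2 ∧ HSeg p c1.1 c2.1 c2.2)

def LConvex (p : Set (ℤ × ℤ)) : Prop := ∀ c1 ∈ p, ∀ c2 ∈ p, LPath p c1 c2

def NECorner (p : Set (ℤ × ℤ)) (x y : ℤ) : Prop :=
  (x, y) ∈ p ∧ (x + 1, y) ∉ p ∧ (x, y + 1) ∉ p

def NWCorner (p : Set (ℤ × ℤ)) (x y : ℤ) : Prop :=
  (x, y) ∈ p ∧ (x - 1, y) ∉ p ∧ (x, y + 1) ∉ p

def Corner (p : Set (ℤ × ℤ)) (x y : ℤ) : Prop :=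
  (x, y) ∈ p ∧
    (((x, y + 1) ∉ p ∧ (x + 1, y) ∉ p) ∨ ((x + 1, y) ∉ p ∧ (x, y - 1) ∉ p) ∨
      ((x, y - 1) ∉ p ∧ (x - 1, y) ∉ p) ∨ ((x - 1, y) ∉ p ∧ (x, y + 1) ∉ p))

lemma crossing (R : Set (ℤ × ℤ)) :
    ∀ l : List (ℤ × ℤ), l.Chain' Adj → ∀ c1 c2, l.head? = some c1 → l.getLast? = some c2 →
      c1 ∉ R → c2 ∈ R → ∃ a ∈ l, ∃ b ∈ l, a ∉ R ∧ b ∈ R ∧ Adj a b := by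
  intro l
  induction l with
  | nil => intro _ c1 c2 h1; simp at h1
  | cons c rest ih =>
    intro hch c1 c2 h1 h2 hc1 hc2
    simp only [List.head?_cons, Option.some_inj] at h1
    subst h1
    match rest, h2 with
    | [], h2 =>
      simp at h2; subst h2; exact absurd hc2 hc1
    | d :: rest', h2 =>
      have hadj : Adj c d := (List.isChain_cons_cons.mp hch).1
      by_cases hd : d ∈ R
      · exact ⟨c, List.mem_cons_self, d, by simp, hc1, hd, hadj⟩
      · have h2' : (d :: rest').getLast? = some c2 := by
          rwa [List.getLast?_cons_cons] at h2
        obtain ⟨a, ha, b, hb, h⟩ := ih (List.isChain_cons_cons.mp hch).2 d c2 rfl h2' hd hc2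
        exact ⟨a, List.mem_cons_of_mem _ ha, b, List.mem_cons_of_mem _ hb, h⟩

/-- in an HV-convex polyomino, a cell strictly east of a NE corner's column
and strictly south of row `y'` forces a cell of `p` on row `y' - 1` strictly east of `x`,
or in column `x + 1` strictly south of `y'`. -/
theorem forbidden_region_boundary (p : Set (ℤ × ℤ)) (hfin : p.Finite) (hne : p.Nonempty)
    (hconn : FourConnected p) (hH : HConvex p) (hV : VConvex p)
    (x y y' : ℤ) (hNE : NECorner p x y) (hy' : IsLeast {t : ℤ | (x, t) ∈ p} y')
    (x'' y'' : ℤ) (hc : (x'', y'') ∈ p) (hx : x < x'') (hy : y'' < y') :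
    (∃ s : ℤ, x < s ∧ (s, y' - 1) ∈ p) ∨ (∃ t : ℤ, t < y' ∧ (x + 1, t) ∈ p) := by
  have hxy' : (x, y') ∈ p := hy'.1
  obtain ⟨l, h1, h2, hmem, hch⟩ := hconn (x, y') hxy' (x'', y'') hc
  set R : Set (ℤ × ℤ) := {c | x < c.1 ∧ c.2 < y'} with hR
  have hstart : (x, y') ∉ R := by simp [hR]
  have hend : (x'', y'') ∈ R := ⟨hx, hy⟩
  obtain ⟨a, ha, b, hb, haR, hbR, hadj⟩ := crossing R l hch _ _ h1 h2 hstart hend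
  have hap : a ∈ p := hmem a ha
  have hbp : b ∈ p := hmem b hb
  have haR' : ¬(x < a.1 ∧ a.2 < y') := haR
  obtain ⟨hb1, hb2⟩ := hbR
  unfold Adj at hadj
  rcases Nat.eq_zero_or_pos (a.1 - b.1).natAbs with h | h
  · -- vertical move: a.1 = b.1
    have e1 : a.1 = b.1 := by omega
    have e2 : a.2 = b.2 + 1 ∨ a.2 = b.2 - 1 := by omega
    have ha2 : ¬ a.2 < y' := fun hlt => haR' ⟨e1 ▸ hb1, hlt⟩
    have : b.2 = y' - 1 := by omega
    left
    refine ⟨b.1, hb1, ?_⟩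
    rw [← this]
    simpa using hbp
  · -- horizontal move: a.2 = b.2
    have e2 : a.2 = b.2 := by omega
    have e1 : a.1 = b.1 + 1 ∨ a.1 = b.1 - 1 := by omega
    have ha1 : ¬ x < a.1 := fun hlt => haR' ⟨hlt, e2 ▸ hb2⟩
    have : b.1 = x + 1 := by omega
    right
    refine ⟨b.2, hb2, ?_⟩
    rw [← this]
    simpa using hbp
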